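/- Let p, q ∈ [1,∞] and let p' be the conjugate exponent of p. For every nonzero signal f : V → X, the uncertainty inequality ‖f‖_p · ‖f̂‖_p / (‖f‖_q · ‖f̂‖_q) ≥ 1 / (‖U‖_{p',q} · ‖U*‖_{p',q}) holds. -/

import Mathlib

open Finset
open scoped ENNReal

/-- The `L^p` norm of a signal `f : Fin N → E` (sup-norm when `p = ∞`). -/
noncomputable def gsNorm {E : Type*} [NormedAddCommGroup E] {N : ℕ} (p : ℝ≥0∞)
    (f : Fin N → E) : ℝ :=
  if p = ∞ then ⨆ n, ‖f n‖ else (∑ n, ‖f n‖ ^ p.toReal) ^ (1 / p.toReal)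

/-- `u k` is the `k`-th column of a unitary matrix, i.e. the family of columns is
orthonormal for the standard inner product on `𝕂^N` (hence an orthonormal basis). -/
def OrthoBasis {𝕂 : Type*} [RCLike 𝕂] {N : ℕ} (u : Fin N → Fin N → 𝕂) : Prop :=
  ∀ k l : Fin N, ∑ n, (starRingEnd 𝕂) (u k n) * u l n = if k = l then (1 : 𝕂) else 0

/-- Graph Fourier transform: `f̂ k = ∑ n, conj (u k n) • f n`. -/
noncomputable def gft {𝕂 : Type*} [RCLike 𝕂] {X : Type*} [NormedAddCommGroup X]
    [NormedSpace 𝕂 X] {N : ℕ} (u : Fin N → Fin N → 𝕂) (f : Fin N → X) : Fin N → X :=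
  fun k => ∑ n, (starRingEnd 𝕂) (u k n) • f n

/-- `p`-coherence `κ_p(U)`: the maximum of the `ℓ^p` norms of the columns of `U`. -/
noncomputable def coh {𝕂 : Type*} [RCLike 𝕂] {N : ℕ} (p : ℝ≥0∞)
    (u : Fin N → Fin N → 𝕂) : ℝ :=
  ⨆ k, gsNorm p (u k)

/-- Mixed norm `‖U‖_{p,q}`: the `ℓ^q` norm of the vector of `ℓ^p` norms of the columns. -/
noncomputable def mixNorm {𝕂 : Type*} [RCLike 𝕂] {N : ℕ} (p q : ℝ≥0∞)
    (u : Fin N → Fin N → 𝕂) : ℝ :=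
  gsNorm q (fun k => gsNorm p (u k))

/-- Graph convolution of a scalar signal `α` with a signal `f`:
`(α*f)(n) = ∑ k, u k n • (α̂ k • f̂ k)`. -/
noncomputable def gconv {𝕂 : Type*} [RCLike 𝕂] {X : Type*} [NormedAddCommGroup X]
    [NormedSpace 𝕂 X] {N : ℕ} (u : Fin N → Fin N → 𝕂) (α : Fin N → 𝕂)
    (f : Fin N → X) : Fin N → X :=
  fun n => ∑ k, u k n • (gft u α k • gft u f k)

/-- Graph translation operator `T_m f (n) = ∑ k, (u k n * conj (u k m)) • f̂ k`. -/
noncomputable def gtrans {𝕂 : Type*} [RCLike 𝕂] {X : Type*} [NormedAddCommGroup X]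
    [NormedSpace 𝕂 X] {N : ℕ} (u : Fin N → Fin N → 𝕂) (m : Fin N)
    (f : Fin N → X) : Fin N → X :=
  fun n => ∑ k, (u k n * (starRingEnd 𝕂) (u k m)) • gft u f k

/-! ### Auxiliary lemmas -/

section Aux

variable {E : Type*} [NormedAddCommGroup E] {N : ℕ}

lemma gsNorm_nonneg (p : ℝ≥0∞) (f : Fin N → E) : 0 ≤ gsNorm p f := by
  unfold gsNorm
  split_ifs with h
  · exact Real.iSup_nonneg fun n => norm_nonneg _
  · positivity

lemma gsNorm_norm (p : ℝ≥0∞) (f : Fin N → E) : gsNorm p (fun n => ‖f n‖) = gsNorm p f := by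
  simp [gsNorm]

lemma gsNorm_pos {p : ℝ≥0∞} (hp : 1 ≤ p) {f : Fin N → E} (hf : f ≠ 0) :
    0 < gsNorm p f := by
  obtain ⟨n0, hn0⟩ : ∃ n, f n ≠ 0 := by
    by_contra h; push_neg at h; exact hf (funext h)
  unfold gsNorm
  split_ifs with h
  · exact lt_of_lt_of_le (norm_pos_iff.mpr hn0)
      (le_ciSup (f := fun n => ‖f n‖) (Set.Finite.bddAbove (Set.finite_range _)) n0)
  · have hp0 : p ≠ 0 := (lt_of_lt_of_le zero_lt_one hp).ne'
    have ht : 0 < p.toReal := ENNReal.toReal_pos hp0 h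
    apply Real.rpow_pos_of_pos
    refine Finset.sum_pos' (fun n _ => by positivity) ⟨n0, Finset.mem_univ n0, ?_⟩
    exact Real.rpow_pos_of_pos (norm_pos_iff.mpr hn0) _

lemma gsNorm_le_of_le {q : ℝ≥0∞} (hq : 1 ≤ q) (hN : 0 < N) {f : Fin N → E}
    {g : Fin N → ℝ} (hg : ∀ n, 0 ≤ g n) {c : ℝ} (hc : 0 ≤ c)
    (h : ∀ n, ‖f n‖ ≤ g n * c) : gsNorm q f ≤ gsNorm q g * c := by
  have : Nonempty (Fin N) := ⟨⟨0, hN⟩⟩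
  have hgn : ∀ n, ‖g n‖ = g n := fun n => Real.norm_of_nonneg (hg n)
  unfold gsNorm
  simp only [hgn]
  split_ifs with hq'
  · refine ciSup_le fun n => (h n).trans ?_
    exact mul_le_mul_of_nonneg_right
      (le_ciSup (Set.Finite.bddAbove (Set.finite_range _)) n) hc
  · have hq0 : q ≠ 0 := (lt_of_lt_of_le zero_lt_one hq).ne'
    have ht : 0 < q.toReal := ENNReal.toReal_pos hq0 hq'
    have h1 : ∑ n, ‖f n‖ ^ q.toReal ≤ (∑ n, g n ^ q.toReal) * c ^ q.toReal := by
      rw [Finset.sum_mul]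
      refine Finset.sum_le_sum fun n _ => ?_
      rw [← Real.mul_rpow (hg n) hc]
      exact Real.rpow_le_rpow (norm_nonneg _) (h n) ht.le
    calc (∑ n, ‖f n‖ ^ q.toReal) ^ (1 / q.toReal)
        ≤ ((∑ n, g n ^ q.toReal) * c ^ q.toReal) ^ (1 / q.toReal) := by
          apply Real.rpow_le_rpow (by positivity) h1 (by positivity)
      _ = (∑ n, g n ^ q.toReal) ^ (1 / q.toReal) * c := by
          rw [Real.mul_rpow (Finset.sum_nonneg fun n _ => Real.rpow_nonneg (hg n) _)
            (Real.rpow_nonneg hc _), one_div, Real.rpow_rpow_inv hc ht.ne']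

lemma holder_sum {N : ℕ} (hN : 0 < N) {p p' : ℝ≥0∞} (hp : 1 ≤ p)
    (hpp' : 1 / p + 1 / p' = 1) (a b : Fin N → ℝ)
    (ha : ∀ n, 0 ≤ a n) (hb : ∀ n, 0 ≤ b n) :
    ∑ n, a n * b n ≤ gsNorm p' a * gsNorm p b := by
  have : Nonempty (Fin N) := ⟨⟨0, hN⟩⟩
  have han : ∀ n, ‖a n‖ = a n := fun n => Real.norm_of_nonneg (ha n)
  have hbn : ∀ n, ‖b n‖ = b n := fun n => Real.norm_of_nonneg (hb n)
  rcases eq_or_lt_of_le hp with hp1 | hp1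
  · -- p = 1, p' = ∞
    have hp1 : p = 1 := hp1.symm
    have hp' : p' = ∞ := by
      rw [hp1] at hpp'
      simp only [one_div, inv_one] at hpp'
      have h0 : p'⁻¹ = 0 := by
        have h' : (1 : ℝ≥0∞) + p'⁻¹ = 1 + 0 := by rw [add_zero]; exact hpp'
        exact (ENNReal.add_right_inj (by simp)).mp h'
      simpa [ENNReal.inv_eq_zero] using h0
    subst hp1 hp'
    simp only [gsNorm, if_pos rfl, if_neg (by simp : (1:ℝ≥0∞) ≠ ∞), ENNReal.toReal_one,
      Real.rpow_one, one_div_one, han, hbn]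
    calc ∑ n, a n * b n ≤ ∑ n, (⨆ m, a m) * b n := by
          refine Finset.sum_le_sum fun n _ => ?_
          exact mul_le_mul_of_nonneg_right
            (le_ciSup (Set.Finite.bddAbove (Set.finite_range _)) n) (hb n)
      _ = (⨆ m, a m) * ∑ n, b n := by rw [← Finset.mul_sum]
  · rcases eq_or_ne p ∞ with hpi | hpi
    · -- p = ∞, p' = 1
      have hp' : p' = 1 := by
        rw [hpi] at hpp'
        simp only [one_div, ENNReal.inv_top, zero_add] at hpp'
        rwa [ENNReal.inv_eq_one] at hpp'
      subst hpi hp'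
      simp only [gsNorm, if_pos rfl, if_neg (by simp : (1:ℝ≥0∞) ≠ ∞), ENNReal.toReal_one,
        Real.rpow_one, one_div_one, han, hbn]
      calc ∑ n, a n * b n ≤ ∑ n, a n * ⨆ m, b m := by
            refine Finset.sum_le_sum fun n _ => ?_
            exact mul_le_mul_of_nonneg_left
              (le_ciSup (Set.Finite.bddAbove (Set.finite_range _)) n) (ha n)
        _ = (∑ n, a n) * ⨆ m, b m := by rw [← Finset.sum_mul]
    · -- 1 < p < ∞
      have hp0 : p ≠ 0 := (lt_trans zero_lt_one hp1).ne'
      have hp'i : p' ≠ ∞ := by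
        intro h
        rw [h] at hpp'
        simp only [one_div, ENNReal.inv_top, add_zero] at hpp'
        rw [ENNReal.inv_eq_one] at hpp'
        exact hp1.ne' hpp'
      have hp'0 : p' ≠ 0 := by
        intro h
        rw [h] at hpp'
        simp at hpp'
      have hps : 1 < p.toReal := by
        have := ENNReal.toReal_strict_mono hpi hp1
        simpa using this
      have hinv : p.toReal⁻¹ + p'.toReal⁻¹ = 1 := by
        have := congrArg ENNReal.toReal hpp'
        rw [ENNReal.toReal_add (by simp [hp0]) (by simp [hp'0])] at this
        simpa [one_div, ENNReal.toReal_inv] using this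
      have hconj : (p'.toReal).HolderConjugate p.toReal :=
        (Real.holderConjugate_iff.mpr ⟨hps, hinv⟩).symm
      have := Real.inner_le_Lp_mul_Lq Finset.univ a b hconj
      simp only [Real.norm_eq_abs] at *
      calc ∑ n, a n * b n
          ≤ (∑ n, |a n| ^ p'.toReal) ^ (1 / p'.toReal) *
            (∑ n, |b n| ^ p.toReal) ^ (1 / p.toReal) := this
        _ = gsNorm p' a * gsNorm p b := by
            simp [gsNorm, if_neg hp'i, if_neg hpi, Real.norm_eq_abs]

end Aux

section Inversion

variable {𝕂 : Type*} [RCLike 𝕂] {X : Type*} [NormedAddCommGroup X]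
  [NormedSpace 𝕂 X] {N : ℕ}

lemma ortho_rows (u : Fin N → Fin N → 𝕂) (hU : OrthoBasis u) (n m : Fin N) :
    ∑ k, u k n * (starRingEnd 𝕂) (u k m) = if n = m then 1 else 0 := by
  have hrow : ∀ k l : Fin N, ∑ j, u k j * (starRingEnd 𝕂) (u l j)
      = if k = l then (1 : 𝕂) else 0 := by
    intro k l
    have h := congrArg (starRingEnd 𝕂) (hU k l)
    simp only [map_sum, map_mul, starRingEnd_self_apply] at h
    rw [h]
    split_ifs <;> simp
  let M : Matrix (Fin N) (Fin N) 𝕂 := Matrix.of fun k j => u k j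
  have h1 : M * M.conjTranspose = 1 := by
    ext k l
    simp only [Matrix.mul_apply, Matrix.conjTranspose_apply, Matrix.one_apply,
      Matrix.of_apply, M, RCLike.star_def]
    exact hrow k l
  have h2 : M.conjTranspose * M = 1 := mul_eq_one_comm.mp h1
  have h3 := congrFun (congrFun h2 m) n
  simp only [Matrix.mul_apply, Matrix.conjTranspose_apply, Matrix.one_apply,
    Matrix.of_apply, M, RCLike.star_def] at h3
  calc ∑ k, u k n * (starRingEnd 𝕂) (u k m)
      = ∑ k, (starRingEnd 𝕂) (u k m) * u k n :=
        Finset.sum_congr rfl fun k _ => mul_comm _ _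
    _ = if m = n then 1 else 0 := h3
    _ = if n = m then 1 else 0 := by simp [eq_comm]

lemma gft_inv (u : Fin N → Fin N → 𝕂) (hU : OrthoBasis u) (f : Fin N → X) (n : Fin N) :
    ∑ k, u k n • gft u f k = f n := by
  unfold gft
  calc ∑ k, u k n • ∑ m, (starRingEnd 𝕂) (u k m) • f m
      = ∑ k, ∑ m, (u k n * (starRingEnd 𝕂) (u k m)) • f m := by
        simp [Finset.smul_sum, smul_smul]
    _ = ∑ m, (∑ k, u k n * (starRingEnd 𝕂) (u k m)) • f m := by
        rw [Finset.sum_comm]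
        simp [Finset.sum_smul]
    _ = f n := by
        simp only [fun m => ortho_rows u hU n m]
        simp [ite_smul]

end Inversion

/-- uncertainty principle
`‖f‖_p‖f̂‖_p / (‖f‖_q‖f̂‖_q) ≥ 1/(‖U‖_{p',q}·‖U*‖_{p',q})`. -/
theorem gft_uncertainty_three {𝕂 : Type*} [RCLike 𝕂] {X : Type*} [NormedAddCommGroup X]
    [NormedSpace 𝕂 X] [CompleteSpace X] {N : ℕ} (hN : 0 < N)
    (u : Fin N → Fin N → 𝕂) (hU : OrthoBasis u)
    (p p' q : ℝ≥0∞) (hp : 1 ≤ p) (hq : 1 ≤ q) (hpp' : 1 / p + 1 / p' = 1) :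
    ∀ f : Fin N → X, f ≠ 0 →
      (gsNorm p f * gsNorm p (gft u f)) / (gsNorm q f * gsNorm q (gft u f)) ≥
        1 / (mixNorm p' q u * mixNorm p' q (fun n k => u k n)) := by
  intro f hf
  have hNe : Nonempty (Fin N) := ⟨⟨0, hN⟩⟩
  have hFne : gft u f ≠ 0 := by
    intro h0
    apply hf
    funext n
    rw [← gft_inv u hU f n, h0]
    simp
  -- Bound 1 : ‖f̂‖_q ≤ ‖U‖_{p',q} ‖f‖_p
  have key1 : gsNorm q (gft u f) ≤ mixNorm p' q u * gsNorm p f := by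
    have hb : ∀ k, ‖gft u f k‖ ≤ gsNorm p' (u k) * gsNorm p f := by
      intro k
      calc ‖gft u f k‖ ≤ ∑ n, ‖u k n‖ * ‖f n‖ := by
            refine (norm_sum_le _ _).trans ?_
            simp [norm_smul]
        _ ≤ gsNorm p' (fun n => ‖u k n‖) * gsNorm p (fun n => ‖f n‖) :=
            holder_sum hN hp hpp' _ _ (fun n => norm_nonneg _) (fun n => norm_nonneg _)
        _ = gsNorm p' (u k) * gsNorm p f := by rw [gsNorm_norm, gsNorm_norm]
    exact gsNorm_le_of_le hq hN (fun k => gsNorm_nonneg _ _) (gsNorm_nonneg _ _) hb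
  -- Bound 2 : ‖f‖_q ≤ ‖U*‖_{p',q} ‖f̂‖_p
  have key2 : gsNorm q f ≤ mixNorm p' q (fun n k => u k n) * gsNorm p (gft u f) := by
    have hb : ∀ n, ‖f n‖ ≤ gsNorm p' (fun k => u k n) * gsNorm p (gft u f) := by
      intro n
      calc ‖f n‖ = ‖∑ k, u k n • gft u f k‖ := by rw [gft_inv u hU f n]
        _ ≤ ∑ k, ‖u k n‖ * ‖gft u f k‖ := by
            refine (norm_sum_le _ _).trans ?_
            simp [norm_smul]
        _ ≤ gsNorm p' (fun k => ‖u k n‖) * gsNorm p (fun k => ‖gft u f k‖) :=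
            holder_sum hN hp hpp' _ _ (fun k => norm_nonneg _) (fun k => norm_nonneg _)
        _ = gsNorm p' (fun k => u k n) * gsNorm p (gft u f) := by rw [gsNorm_norm, gsNorm_norm]
    exact gsNorm_le_of_le hq hN (fun n => gsNorm_nonneg _ _) (gsNorm_nonneg _ _) hb
  have hfp : 0 < gsNorm p f := gsNorm_pos hp hf
  have hfq : 0 < gsNorm q f := gsNorm_pos hq hf
  have hFp : 0 < gsNorm p (gft u f) := gsNorm_pos hp hFne
  have hFq : 0 < gsNorm q (gft u f) := gsNorm_pos hq hFne
  set M1 := mixNorm p' q u with hM1def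
  set M2 := mixNorm p' q (fun n k => u k n) with hM2def
  have hM1 : 0 ≤ M1 := gsNorm_nonneg _ _
  have hM2 : 0 ≤ M2 := gsNorm_nonneg _ _
  have hBC : gsNorm q f * gsNorm q (gft u f) ≤
      M1 * M2 * (gsNorm p f * gsNorm p (gft u f)) := by
    calc gsNorm q f * gsNorm q (gft u f)
        ≤ (M2 * gsNorm p (gft u f)) * (M1 * gsNorm p f) :=
          mul_le_mul key2 key1 hFq.le (by positivity)
      _ = M1 * M2 * (gsNorm p f * gsNorm p (gft u f)) := by ring
  have hC : 0 < M1 * M2 := by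
    rcases lt_or_eq_of_le (mul_nonneg hM1 hM2) with h | h
    · exact h
    · exfalso
      rw [← h, zero_mul] at hBC
      nlinarith
  rw [ge_iff_le, div_le_div_iff₀ hC (by positivity)]
  rw [one_mul]
  exact hBC.trans_eq (by ring)
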